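/- Let X be a real random variable with symmetric probability density f(x) = K₀(|x|)/π. Define m(α, ν) := E[tanh(αX + ν)·X] and let β := tanh(ν). Then m(α, ν) = (1 - β²) · E[ tanh(αX)·X / (1 - β² tanh(αX)²) ]. -/

import Mathlib

open Real MeasureTheory

/-- Modified Bessel function of the second kind of order 0, via its integral
representation `K₀(x) = ∫₀^∞ exp(-x cosh t) dt`. -/
noncomputable def besselK0 (x : ℝ) : ℝ :=
  ∫ t in Set.Ioi (0 : ℝ), Real.exp (-x * Real.cosh t)

/-- The probability density `x ↦ K₀(|x|)/π` on ℝ. -/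
noncomputable def besselDensity (x : ℝ) : ℝ := besselK0 |x| / Real.pi

lemma abs_tanh_lt_one (x : ℝ) : |Real.tanh x| < 1 := by
  rw [Real.tanh_eq_sinh_div_cosh, abs_div, abs_of_pos (Real.cosh_pos x),
    div_lt_one (Real.cosh_pos x)]
  nlinarith [Real.cosh_sq x, Real.cosh_pos x, sq_abs (Real.sinh x),
    abs_nonneg (Real.sinh x)]

lemma my_tanh_add (a b : ℝ) :
    Real.tanh (a + b) = (Real.tanh a + Real.tanh b) / (1 + Real.tanh a * Real.tanh b) := by
  have h1 : 0 < Real.cosh a * Real.cosh b + Real.sinh a * Real.sinh b := by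
    rw [← Real.cosh_add]; exact Real.cosh_pos _
  have ha := Real.cosh_pos a
  have hb := Real.cosh_pos b
  have hd : 0 < 1 + Real.tanh a * Real.tanh b := by
    rw [Real.tanh_eq_sinh_div_cosh, Real.tanh_eq_sinh_div_cosh]
    have e : 1 + Real.sinh a / Real.cosh a * (Real.sinh b / Real.cosh b) =
        (Real.cosh a * Real.cosh b + Real.sinh a * Real.sinh b) /
          (Real.cosh a * Real.cosh b) := by
      field_simp
    rw [e]
    exact div_pos h1 (by positivity)
  rw [eq_div_iff hd.ne']
  have hab := Real.cosh_pos (a + b)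
  rw [Real.tanh_eq_sinh_div_cosh (a + b), Real.tanh_eq_sinh_div_cosh a,
    Real.tanh_eq_sinh_div_cosh b]
  field_simp
  rw [Real.sinh_add, Real.cosh_add]
  ring

lemma continuous_tanh' : Continuous Real.tanh := by
  have e : Real.tanh = fun x => Real.sinh x / Real.cosh x :=
    funext fun x => Real.tanh_eq_sinh_div_cosh x
  rw [e]
  exact Real.continuous_sinh.div Real.continuous_cosh fun x => (Real.cosh_pos x).ne'

lemma besselK0_nonneg (x : ℝ) : 0 ≤ besselK0 x :=
  integral_nonneg fun t => (Real.exp_pos _).le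

lemma besselK0_measurable : Measurable besselK0 := by
  have h : StronglyMeasurable fun p : ℝ × ℝ => Real.exp (-p.1 * Real.cosh p.2) := by
    exact (Continuous.stronglyMeasurable (by fun_prop))
  exact (h.integral_prod_right').measurable

lemma aux_bound {x t : ℝ} (hx : 0 ≤ x) (ht : 0 ≤ t) :
    x * Real.exp (-x * Real.cosh t) ≤ 4 * Real.exp (-x / 2) * Real.exp (-t) := by
  have hinv : Real.exp (-t) * Real.exp t = 1 := by rw [← Real.exp_add]; simp
  have hc : Real.exp t / 4 + 1 / 2 ≤ Real.cosh t := by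
    rw [Real.cosh_eq]
    nlinarith [sq_nonneg (Real.exp t - 1), Real.exp_pos t, Real.exp_pos (-t)]
  have h1 : Real.exp (-x * Real.cosh t) ≤ Real.exp (-(x * Real.exp t / 4) + -x / 2) := by
    apply Real.exp_le_exp.2; nlinarith
  have key : x * Real.exp (-(x * Real.exp t / 4)) ≤ 4 * Real.exp (-t) := by
    have hu : x * Real.exp t / 4 ≤ Real.exp (x * Real.exp t / 4) := by
      have := Real.add_one_le_exp (x * Real.exp t / 4); linarith
    have hx4 : x ≤ 4 * Real.exp (-t) * Real.exp (x * Real.exp t / 4) := by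
      nlinarith [Real.exp_pos (-t), Real.exp_pos (x * Real.exp t / 4)]
    calc x * Real.exp (-(x * Real.exp t / 4))
        ≤ (4 * Real.exp (-t) * Real.exp (x * Real.exp t / 4)) *
            Real.exp (-(x * Real.exp t / 4)) :=
          mul_le_mul_of_nonneg_right hx4 (Real.exp_pos _).le
      _ = 4 * Real.exp (-t) := by
          rw [mul_assoc, ← Real.exp_add]; simp
  calc x * Real.exp (-x * Real.cosh t)
      ≤ x * Real.exp (-(x * Real.exp t / 4) + -x / 2) :=
        mul_le_mul_of_nonneg_left h1 hx
    _ = (x * Real.exp (-(x * Real.exp t / 4))) * Real.exp (-x / 2) := by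
        rw [Real.exp_add]; ring
    _ ≤ (4 * Real.exp (-t)) * Real.exp (-x / 2) :=
        mul_le_mul_of_nonneg_right key (Real.exp_pos _).le
    _ = 4 * Real.exp (-x / 2) * Real.exp (-t) := by ring

lemma besselK0_mul_le {x : ℝ} (hx : 0 ≤ x) : x * besselK0 x ≤ 4 * Real.exp (-x / 2) := by
  rw [besselK0, ← integral_const_mul]
  have hgi : IntegrableOn (fun t : ℝ => 4 * Real.exp (-x / 2) * Real.exp (-t)) (Set.Ioi 0) := by
    have h := ((exp_neg_integrableOn_Ioi 0 (by norm_num : (0:ℝ) < 1)).const_mul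
      (4 * Real.exp (-x / 2)))
    simp only [neg_mul, one_mul] at h
    exact h
  calc (∫ t in Set.Ioi (0:ℝ), x * Real.exp (-x * Real.cosh t))
      ≤ ∫ t in Set.Ioi (0:ℝ), 4 * Real.exp (-x / 2) * Real.exp (-t) := by
        apply integral_mono_of_nonneg
        · filter_upwards with t; positivity
        · exact hgi
        · filter_upwards [ae_restrict_mem measurableSet_Ioi] with t ht
          exact aux_bound hx ht.le
    _ = 4 * Real.exp (-x / 2) * ∫ t in Set.Ioi (0:ℝ), Real.exp (-t) := integral_const_mul _ _
    _ = 4 * Real.exp (-x / 2) := by rw [integral_exp_neg_Ioi_zero, mul_one]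

lemma integrable_comp_abs' {f : ℝ → ℝ} (hf : IntegrableOn f (Set.Ioi 0)) :
    Integrable fun x => f |x| := by
  have hIoi : IntegrableOn (fun x => f |x|) (Set.Ioi 0) := by
    apply hf.congr_fun (fun x hx => ?_) measurableSet_Ioi
    rw [abs_of_pos hx]
  have hIic : IntegrableOn (fun x ↦ f |x|) (Set.Iic 0) := by
    rw [← Measure.map_neg_eq_self (volume : Measure ℝ)]
    have m : MeasurableEmbedding fun x : ℝ => -x := (Homeomorph.neg ℝ).measurableEmbedding
    rw [m.integrableOn_map_iff]
    simp_rw [Function.comp_def, abs_neg, Set.neg_preimage, Set.neg_Iic, neg_zero]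
    exact Iff.mpr integrableOn_Ici_iff_integrableOn_Ioi hIoi
  have h := hIic.union hIoi
  rwa [Set.Iic_union_Ioi, integrableOn_univ] at h

lemma besselDensity_nonneg (x : ℝ) : 0 ≤ besselDensity x :=
  div_nonneg (besselK0_nonneg _) Real.pi_pos.le

lemma abs_mul_density_le (x : ℝ) : |x| * besselDensity x ≤ 4 * Real.exp (-|x| / 2) := by
  have h := besselK0_mul_le (abs_nonneg x)
  have hpi : 1 ≤ Real.pi := by linarith [Real.pi_gt_three]
  have hnn : 0 ≤ |x| * besselK0 |x| := mul_nonneg (abs_nonneg x) (besselK0_nonneg _)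
  rw [besselDensity, mul_div_assoc']
  calc |x| * besselK0 |x| / Real.pi ≤ |x| * besselK0 |x| := div_le_self hnn hpi
    _ ≤ 4 * Real.exp (-|x| / 2) := h

lemma integrable_dom : Integrable (fun x : ℝ => 4 * Real.exp (-|x| / 2)) := by
  apply integrable_comp_abs' (f := fun x => 4 * Real.exp (-x / 2))
  have h2 : IntegrableOn (fun t : ℝ => 4 * Real.exp (-(2⁻¹) * t)) (Set.Ioi 0) :=
    (exp_neg_integrableOn_Ioi 0 (by norm_num)).const_mul 4
  apply h2.congr_fun (fun t _ => ?_) measurableSet_Ioi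
  congr 1
  ring

lemma besselDensity_measurable : Measurable besselDensity :=
  (besselK0_measurable.comp measurable_abs).div_const _

lemma pointwise_key (β t x d : ℝ) (ht : |t| < 1) (hb : |β| < 1) :
    (t + β) / (1 + t * β) * x * d + (-t + β) / (1 + -t * β) * (-x) * d =
      2 * ((1 - β ^ 2) * (t * x / (1 - β ^ 2 * t ^ 2) * d)) := by
  have htβ : |t * β| < 1 := by
    rw [abs_mul]
    calc |t| * |β| ≤ |t| * 1 := by
          exact mul_le_mul_of_nonneg_left hb.le (abs_nonneg t)
      _ < 1 := by rwa [mul_one]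
  obtain ⟨hl, hr⟩ := abs_lt.1 htβ
  have h1p : (0:ℝ) < 1 + t * β := by linarith
  have h1m : (0:ℝ) < 1 - t * β := by linarith
  have hden : (0:ℝ) < 1 - β ^ 2 * t ^ 2 := by nlinarith
  have e : 1 + -t * β = 1 - t * β := by ring
  rw [e]
  have hden' : (1:ℝ) - β ^ 2 * t ^ 2 = (1 + t * β) * (1 - t * β) := by ring
  rw [hden']
  field_simp
  ring

theorem bessel_m_identity (α ν : ℝ) :
    (∫ x : ℝ, Real.tanh (α * x + ν) * x * besselDensity x) =
      (1 - Real.tanh ν ^ 2) *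
        ∫ x : ℝ, (Real.tanh (α * x) * x / (1 - Real.tanh ν ^ 2 * Real.tanh (α * x) ^ 2)) *
          besselDensity x := by
  set β := Real.tanh ν with hβ
  set g : ℝ → ℝ := fun x => Real.tanh (α * x + ν) * x * besselDensity x with hg
  set h : ℝ → ℝ := fun x =>
    Real.tanh (α * x) * x / (1 - β ^ 2 * Real.tanh (α * x) ^ 2) * besselDensity x with hh
  have hgmeas : AEStronglyMeasurable g volume := by
    have hcont : Continuous fun x : ℝ => Real.tanh (α * x + ν) * x :=
      (continuous_tanh'.comp ((continuous_const.mul continuous_id).add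
        continuous_const)).mul continuous_id
    exact (hcont.measurable.mul besselDensity_measurable).aestronglyMeasurable
  have hgint : Integrable g := by
    apply Integrable.mono' integrable_dom hgmeas
    filter_upwards with x
    have h1 : |Real.tanh (α * x + ν)| ≤ 1 := (_root_.abs_tanh_lt_one _).le
    have h2 : 0 ≤ |x| * besselDensity x := mul_nonneg (abs_nonneg x) (besselDensity_nonneg x)
    calc ‖g x‖ = |Real.tanh (α * x + ν)| * (|x| * besselDensity x) := by
          rw [Real.norm_eq_abs, hg]
          rw [abs_mul, abs_mul, abs_of_nonneg (besselDensity_nonneg x), mul_assoc]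
      _ ≤ 1 * (|x| * besselDensity x) := mul_le_mul_of_nonneg_right h1 h2
      _ = |x| * besselDensity x := one_mul _
      _ ≤ 4 * Real.exp (-|x| / 2) := abs_mul_density_le x
  have hgnegint : Integrable fun x => g (-x) := hgint.comp_neg
  have key : ∀ x : ℝ, g x + g (-x) = 2 * ((1 - β ^ 2) * h x) := by
    intro x
    have hneg : besselDensity (-x) = besselDensity x := by
      simp [besselDensity, abs_neg]
    have e1 : Real.tanh (α * x + ν) = (Real.tanh (α * x) + β) / (1 + Real.tanh (α * x) * β) :=
      my_tanh_add (α * x) ν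
    have e2 : Real.tanh (α * -x + ν) = (-Real.tanh (α * x) + β) / (1 + -Real.tanh (α * x) * β) := by
      have : α * -x = -(α * x) := by ring
      rw [this, my_tanh_add (-(α * x)) ν, Real.tanh_neg]
    show Real.tanh (α * x + ν) * x * besselDensity x +
        Real.tanh (α * -x + ν) * (-x) * besselDensity (-x) =
      2 * ((1 - β ^ 2) *
        (Real.tanh (α * x) * x / (1 - β ^ 2 * Real.tanh (α * x) ^ 2) * besselDensity x))
    rw [hneg, e1, e2]
    exact pointwise_key β (Real.tanh (α * x)) x (besselDensity x)
      (_root_.abs_tanh_lt_one _) (_root_.abs_tanh_lt_one _)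
  have hcomp : (∫ x, g (-x)) = ∫ x, g x := integral_neg_eq_self g volume
  have h2 : (2:ℝ) * ∫ x, g x = ∫ x, 2 * ((1 - β ^ 2) * h x) := by
    calc (2:ℝ) * ∫ x, g x = (∫ x, g x) + ∫ x, g (-x) := by rw [hcomp]; ring
      _ = ∫ x, (g x + g (-x)) := (integral_add hgint hgnegint).symm
      _ = ∫ x, 2 * ((1 - β ^ 2) * h x) :=
        integral_congr_ae (Filter.Eventually.of_forall key)
  have h3 : (∫ x, 2 * ((1 - β ^ 2) * h x)) = 2 * ((1 - β ^ 2) * ∫ x, h x) := by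
    simp_rw [← mul_assoc]
    rw [integral_const_mul, mul_assoc]
  rw [h3] at h2
  have := mul_left_cancel₀ (two_ne_zero (α := ℝ)) h2
  exact this
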